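/- arXiv:1001.1775 — 3 statements merged into one kernel-verified Lean document; each statement's English description precedes it below -/
import Mathlib

section
/- Let f be continuous on the closed unit disk and holomorphic on the open unit disk, with f^#(ξ) = ∫_{−1/2}^{1/2} f(e^{2πix}) e^{−2πixξ} dx. Then for 0 < α < 2 and 0 < λ < 1: α · Σ_{j=−∞}^{−1} f^#(αj) λ^{−αj} = (α λ^α sin(απ)/π) · ∫₀¹ t^{α−1} f(−t) / |e^{−iαπ} − (λt)^α|² dt. -/
open Complex Filter MeasureTheory Set intervalIntegral Metric


/-- The fractional Fourier coefficient `f^#(ξ) = ∫_{-1/2}^{1/2} f(e^{2πix}) e^{-2πixξ} dx`. -/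
noncomputable def fsharp (f : ℂ → ℂ) (ξ : ℝ) : ℂ :=
  ∫ x in (-(1/2) : ℝ)..(1/2),
    f (Complex.exp (2 * Real.pi * Complex.I * x)) *
      Complex.exp (-(2 * Real.pi * Complex.I * x * ξ))



lemma integral_exp_two_pi (γ : ℝ) (hγ : γ ≠ 0) :
    ∫ x in (-(1/2) : ℝ)..(1/2), Complex.exp (2 * Real.pi * Complex.I * x * γ) =
      Complex.sin (Real.pi * γ) / (Real.pi * γ) := by
  have hπγ : ((Real.pi : ℂ) * γ) ≠ 0 := by
    simp [Real.pi_ne_zero, hγ]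
  have hc : (2 * (Real.pi:ℂ) * Complex.I * γ) ≠ 0 := by
    simp [Real.pi_ne_zero, Complex.I_ne_zero, Complex.ofReal_ne_zero, hγ]
  have key : ∀ x : ℝ, 2 * (Real.pi:ℂ) * Complex.I * x * γ = (2 * Real.pi * Complex.I * γ) * x := by
    intro x; ring
  simp_rw [key]
  rw [integral_exp_mul_complex hc]
  push_cast
  have h1 : 2 * (Real.pi:ℂ) * Complex.I * γ * (1 / 2) = (Real.pi:ℂ) * γ * Complex.I := by ring
  have h2 : 2 * (Real.pi:ℂ) * Complex.I * γ * -(1 / 2) = -((Real.pi:ℂ) * γ * Complex.I) := by ring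
  rw [h1, h2, Complex.sin]
  have hI := Complex.I_ne_zero
  field_simp
  ring_nf
  simp [Complex.I_sq]
  ring


lemma hasSum_sin_geom (w θ : ℝ) (hw0 : 0 ≤ w) (hw : w < 1) :
    HasSum (fun m : ℕ => w ^ m * Real.sin ((m + 1) * θ))
      (Real.sin θ / (1 - 2 * w * Real.cos θ + w ^ 2)) := by
  set z : ℂ := (w : ℂ) * Complex.exp (θ * Complex.I) with hz
  have hnz : ‖z‖ < 1 := by
    simp [hz, Complex.norm_exp_ofReal_mul_I, _root_.abs_of_nonneg hw0]
    exact hw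
  have h1z : (1 : ℂ) - z ≠ 0 := by
    intro h
    have hz1 : z = 1 := by linear_combination -h
    rw [hz1] at hnz; simp at hnz
  have hgeo : HasSum (fun m : ℕ => z ^ m) (1 - z)⁻¹ := hasSum_geometric_of_norm_lt_one hnz
  have hgeo2 : HasSum (fun m : ℕ => Complex.exp (θ * Complex.I) * z ^ m)
      (Complex.exp (θ * Complex.I) * (1 - z)⁻¹) := hgeo.mul_left _
  have hD : (1 - 2 * w * Real.cos θ + w ^ 2) = Complex.normSq (1 - z) := by
    simp [hz, Complex.normSq_apply, Complex.sub_re, Complex.sub_im, Complex.mul_re, Complex.mul_im,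
      Complex.exp_ofReal_mul_I_re, Complex.exp_ofReal_mul_I_im]
    ring_nf
    rw [Real.sin_sq_eq_half_sub, Real.cos_two_mul]
    ring
  have hDpos : (0:ℝ) < 1 - 2 * w * Real.cos θ + w ^ 2 := by
    rw [hD]; exact Complex.normSq_pos.2 h1z
  have hconj : (starRingEnd ℂ) (1 - z) = 1 - (w:ℂ) * Complex.exp (-(θ * Complex.I)) := by
    rw [map_sub, map_one, map_mul, Complex.conj_ofReal, ← Complex.exp_conj, map_mul,
      Complex.conj_ofReal, Complex.conj_I]
    ring_nf
  have hcne : (1 : ℂ) - (w:ℂ) * Complex.exp (-(θ * Complex.I)) ≠ 0 := by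
    rw [← hconj]
    intro h
    apply h1z
    rw [← Complex.conj_conj (1 - z), h, map_zero]
  have hmul : Complex.exp (θ * Complex.I) * (1 - (w:ℂ) * Complex.exp (-(θ * Complex.I)))
      = Complex.exp (θ * Complex.I) - w := by
    rw [mul_sub, mul_one, mul_comm ((w:ℂ)) _, ← mul_assoc, ← Complex.exp_add]
    simp
  have hval : Complex.exp (θ * Complex.I) * (1 - z)⁻¹ =
      (Complex.exp (θ * Complex.I) - w) / ((1 - 2 * w * Real.cos θ + w ^ 2 : ℝ) : ℂ) := by
    rw [hD, Complex.normSq_eq_conj_mul_self, hconj, ← hmul,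
      mul_comm (Complex.exp (θ * Complex.I)) (1 - (w:ℂ) * Complex.exp (-(θ * Complex.I))),
      mul_div_mul_left _ _ hcne, div_eq_mul_inv, mul_comm]
  rw [hval] at hgeo2
  have hfun : ∀ m : ℕ, Complex.exp (θ * Complex.I) * z ^ m
      = ((w ^ m : ℝ) : ℂ) * Complex.exp ((((m:ℝ) + 1) * θ : ℝ) * Complex.I) := by
    intro m
    rw [hz, mul_pow, ← Complex.exp_nat_mul]
    push_cast
    rw [mul_comm (Complex.exp ((θ:ℂ) * Complex.I)), mul_assoc, ← Complex.exp_add,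
      show (m:ℂ) * ((θ:ℂ) * Complex.I) + (θ:ℂ) * Complex.I = (((m:ℂ) + 1) * θ) * Complex.I by ring]
  simp_rw [hfun] at hgeo2
  have him := (Complex.hasSum_iff _ _).1 hgeo2 |>.2
  simp_rw [Complex.mul_im, Complex.ofReal_re, Complex.ofReal_im, Complex.exp_ofReal_mul_I_im,
    Complex.exp_ofReal_mul_I_re, zero_mul, add_zero, Complex.div_ofReal_im, Complex.sub_im,
    Complex.exp_ofReal_mul_I_im, Complex.ofReal_im, sub_zero] at him
  exact him

lemma norm_exp_im (w : ℂ) (h : w.re = 0) : ‖Complex.exp w‖ = 1 := by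
  rw [Complex.norm_exp, h, Real.exp_zero]

lemma re_two_pi (x γ : ℝ) : (2 * (Real.pi:ℂ) * Complex.I * x * γ).re = 0 := by
  simp [Complex.mul_re, Complex.mul_im]

lemma claimB (f : ℂ → ℂ)
    (hf_cont : ContinuousOn f (Metric.closedBall 0 1))
    (hf_holo : DifferentiableOn ℂ f (Metric.ball 0 1))
    (β : ℝ) (hβ : 0 < β) :
    fsharp f (-β) = ((Real.sin (β * Real.pi) / Real.pi : ℝ) : ℂ) *
      ∫ t in (0:ℝ)..1, ((t ^ (β - 1) : ℝ) : ℂ) * f (-(t:ℂ)) := by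
  obtain ⟨C, hC⟩ := (isCompact_closedBall (0:ℂ) 1).exists_bound_of_continuousOn hf_cont
  have hC0 : 0 ≤ C := le_trans (norm_nonneg _) (hC 0 (by simp))
  -- power series
  have hDC : DiffContOnCl ℂ f (ball 0 1) := ⟨hf_holo, by rwa [closure_ball (0:ℂ) one_ne_zero]⟩
  have hp : HasFPowerSeriesOnBall f (cauchyPowerSeries f 0 1) 0 1 := by
    have := hDC.hasFPowerSeriesOnBall (R := 1) one_pos
    simpa using this
  set a : ℕ → ℂ := fun n => (cauchyPowerSeries f 0 1).coeff n with ha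
  have hsum : ∀ z : ℂ, ‖z‖ < 1 → HasSum (fun n => a n * z ^ n) (f z) := by
    intro z hz
    have hz' : z ∈ Metric.eball (0:ℂ) 1 := by
      rw [EMetric.mem_ball, edist_eq_enorm_sub, sub_zero, ← ofReal_norm, ENNReal.ofReal_lt_one]
      exact_mod_cast hz
    have := hp.hasSum (y := z) (by simpa using hz')
    simp only [FormalMultilinearSeries.apply_eq_pow_smul_coeff, smul_eq_mul, zero_add] at this
    convert this using 2 with n
    rfl
    ring
  have hsummable : ∀ r : ℝ, 0 ≤ r → r < 1 → Summable (fun n => ‖a n‖ * r ^ n) := by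
    intro r hr0 hr1
    set r' : NNReal := ⟨r, hr0⟩ with hr'
    have h1 : (r' : ENNReal) < (cauchyPowerSeries f 0 1).radius := by
      refine lt_of_lt_of_le ?_ hp.r_le
      rw [show (1 : ENNReal) = ((1 : NNReal) : ENNReal) by norm_cast]
      exact_mod_cast hr1
    have := (cauchyPowerSeries f 0 1).summable_norm_mul_pow h1
    simp only [FormalMultilinearSeries.norm_apply_eq_norm_coef] at this
    exact this
  set e : ℝ → ℂ := fun x => Complex.exp (2 * Real.pi * Complex.I * x) with he
  have hnorme : ∀ x : ℝ, ‖e x‖ = 1 := by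
    intro x
    apply norm_exp_im
    simpa using re_two_pi x 1
  have hnormb : ∀ x : ℝ, ‖Complex.exp (2 * Real.pi * Complex.I * x * β)‖ = 1 :=
    fun x => norm_exp_im _ (re_two_pi x β)
  have hπ : ((Real.pi : ℝ) : ℂ) ≠ 0 := by
    simp [Real.pi_ne_zero]
  have hsin : ∀ n : ℕ, Real.sin (Real.pi * ((n:ℝ) + β)) = (-1)^n * Real.sin (β * Real.pi) := by
    intro n
    induction n with
    | zero => push_cast; rw [zero_add, mul_comm]; ring_nf
    | succ n ih =>
      have harg : Real.pi * (((n+1:ℕ):ℝ) + β) = Real.pi * ((n:ℝ) + β) + Real.pi := by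
        push_cast; ring
      rw [harg, Real.sin_add_pi, ih]
      push_cast; ring
  have key : ∀ r : ℝ, r ∈ Ioo (0:ℝ) 1 →
      (∫ x in (-(1/2):ℝ)..(1/2), f ((r:ℂ) * e x) * Complex.exp (2*Real.pi*Complex.I*x*β))
        = ((Real.sin (β*Real.pi)/Real.pi : ℝ):ℂ)
          * ∫ t in (0:ℝ)..1, ((t ^ (β-1) :ℝ):ℂ) * f (-((r:ℂ) * (t:ℝ))) := by
    intro r hr
    obtain ⟨hr0, hr1⟩ := hr
    have hnormz : ∀ x : ℝ, ‖(r:ℂ) * e x‖ < 1 := by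
      intro x
      rw [norm_mul, hnorme, mul_one, Complex.norm_real, Real.norm_eq_abs, abs_of_pos hr0]
      exact hr1
    have hnormz2 : ∀ t : ℝ, t ∈ Set.Ioc (0:ℝ) 1 → ‖(-((r:ℂ) * (t:ℝ)))‖ < 1 := by
      intro t ht
      rw [norm_neg, norm_mul, Complex.norm_real, Complex.norm_real, Real.norm_eq_abs,
        Real.norm_eq_abs, abs_of_pos hr0, abs_of_pos ht.1]
      nlinarith [ht.2]
    have hA : HasSum
        (fun n => ∫ x in (-(1/2):ℝ)..(1/2),
          a n * ((r:ℂ) * e x)^n * Complex.exp (2*Real.pi*Complex.I*x*β))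
        (∫ x in (-(1/2):ℝ)..(1/2), f ((r:ℂ) * e x) * Complex.exp (2*Real.pi*Complex.I*x*β)) := by
      apply intervalIntegral.hasSum_integral_of_dominated_convergence
        (bound := fun n _ => ‖a n‖ * r ^ n)
      · intro n
        apply Continuous.aestronglyMeasurable
        apply Continuous.mul
        apply Continuous.mul continuous_const
        · apply Continuous.pow
          apply Continuous.mul continuous_const
          exact Complex.continuous_exp.comp (continuous_const.mul Complex.continuous_ofReal)
        · exact Complex.continuous_exp.comp
            ((continuous_const.mul Complex.continuous_ofReal).mul continuous_const)
      · intro n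
        filter_upwards with x
        intro hx
        rw [norm_mul, norm_mul, norm_pow, hnormb, mul_one]
        have hre : ‖(r:ℂ) * e x‖ = r := by
          rw [norm_mul, hnorme, mul_one, Complex.norm_real, Real.norm_eq_abs, abs_of_pos hr0]
        rw [hre]
      · filter_upwards with x
        intro hx
        exact hsummable r hr0.le hr1
      · exact intervalIntegrable_const
      · filter_upwards with x
        intro hx
        exact (hsum _ (hnormz x)).mul_right _
    have hAterm : ∀ n : ℕ, (∫ x in (-(1/2):ℝ)..(1/2),
          a n * ((r:ℂ) * e x)^n * Complex.exp (2*Real.pi*Complex.I*x*β))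
        = a n * (r:ℂ)^n * (Complex.sin (Real.pi * (((n:ℝ) + β : ℝ):ℂ)) /
            (Real.pi * (((n:ℝ) + β : ℝ):ℂ))) := by
      intro n
      have hcongr : ∀ x : ℝ,
          a n * ((r:ℂ) * e x)^n * Complex.exp (2*Real.pi*Complex.I*x*β)
            = (a n * (r:ℂ)^n) * Complex.exp (2*Real.pi*Complex.I*(x:ℝ)*(((n:ℝ) + β : ℝ):ℂ)) := by
        intro x
        rw [he]
        rw [mul_pow, ← Complex.exp_nat_mul,
          show (2:ℂ)*(Real.pi:ℂ)*Complex.I*(x:ℝ)*(((n:ℝ) + β : ℝ):ℂ)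
            = (n:ℂ) * (2*(Real.pi:ℂ)*Complex.I*(x:ℝ)) + 2*(Real.pi:ℂ)*Complex.I*(x:ℝ)*(β:ℂ)
            from by push_cast; ring,
          Complex.exp_add]
        ring
      rw [intervalIntegral.integral_congr (fun x _ => hcongr x),
        intervalIntegral.integral_const_mul]
      have hne : ((n:ℝ) + β) ≠ 0 := by positivity
      rw [integral_exp_two_pi _ hne]
    have hB : HasSum
        (fun n => ∫ t in (0:ℝ)..1, ((t ^ (β-1) :ℝ):ℂ) * (a n * (-((r:ℂ) * (t:ℝ)))^n))
        (∫ t in (0:ℝ)..1, ((t ^ (β-1) :ℝ):ℂ) * f (-((r:ℂ) * (t:ℝ)))) := by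
      apply intervalIntegral.hasSum_integral_of_dominated_convergence
        (bound := fun n t => (‖a n‖ * r ^ n) * t ^ (β-1))
      · intro n
        apply ContinuousOn.aestronglyMeasurable _ measurableSet_uIoc
        rw [Set.uIoc_of_le (by norm_num : (0:ℝ) ≤ 1)]
        apply ContinuousOn.mul
        · apply Complex.continuous_ofReal.comp_continuousOn
          intro t ht
          exact (Real.continuousAt_rpow_const t (β-1) (Or.inl (ne_of_gt ht.1))).continuousWithinAt
        · exact (continuous_const.mul ((continuous_const.mul
            Complex.continuous_ofReal).neg.pow n)).continuousOn
      · intro n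
        rw [Set.uIoc_of_le (by norm_num : (0:ℝ) ≤ 1)]
        filter_upwards with t
        intro htmem
        have hb : ‖((t ^ (β-1) : ℝ) : ℂ)‖ = t ^ (β-1) := by
          rw [Complex.norm_real, Real.norm_eq_abs, _root_.abs_of_nonneg (Real.rpow_nonneg htmem.1.le _)]
        rw [norm_mul, hb, norm_mul, norm_pow, norm_neg, norm_mul, Complex.norm_real,
          Complex.norm_real, Real.norm_eq_abs, Real.norm_eq_abs, abs_of_pos hr0,
          abs_of_pos htmem.1]
        have h1 : (r * t)^n ≤ r^n := by
          apply pow_le_pow_left₀ (mul_nonneg hr0.le htmem.1.le)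
          nlinarith [htmem.1, htmem.2]
        have h2 : ‖a n‖ * (r * t)^n ≤ ‖a n‖ * r^n :=
          mul_le_mul_of_nonneg_left h1 (norm_nonneg _)
        calc t ^ (β-1) * (‖a n‖ * (r*t)^n) ≤ t ^ (β-1) * (‖a n‖ * r^n) :=
              mul_le_mul_of_nonneg_left h2 (Real.rpow_nonneg htmem.1.le _)
          _ = ‖a n‖ * r^n * t ^ (β-1) := by ring
      · filter_upwards with t
        intro htmem
        exact (hsummable r hr0.le hr1).mul_right _
      · simp_rw [tsum_mul_right]
        apply IntervalIntegrable.const_mul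
        exact intervalIntegrable_rpow' (by linarith)
      · rw [Set.uIoc_of_le (by norm_num : (0:ℝ) ≤ 1)]
        filter_upwards with t
        intro htmem
        exact ((hsum _ (hnormz2 t htmem)).mul_left _)
    have hBterm : ∀ n : ℕ, (∫ t in (0:ℝ)..1, ((t ^ (β-1) :ℝ):ℂ) * (a n * (-((r:ℂ) * (t:ℝ)))^n))
        = a n * (-(r:ℂ))^n * (((1/((n:ℝ)+β) : ℝ)):ℂ) := by
      intro n
      have hcongr : ∀ᵐ t ∂MeasureTheory.volume, t ∈ Set.uIoc (0:ℝ) 1 →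
          ((t ^ (β-1) :ℝ):ℂ) * (a n * (-((r:ℂ) * (t:ℝ)))^n)
            = ((t ^ ((n:ℝ)+β-1) :ℝ):ℂ) * (a n * (-(r:ℂ))^n) := by
        rw [Set.uIoc_of_le (by norm_num : (0:ℝ) ≤ 1)]
        filter_upwards with t
        intro htmem
        have ht0 : 0 < t := htmem.1
        have h4 : t ^ ((n:ℝ)+β-1) = t ^ ((n:ℕ):ℝ) * t ^ (β-1) := by
          rw [← Real.rpow_add ht0]
          congr 1
          push_cast
          ring
        have h3 : t ^ ((n:ℕ):ℝ) = t^(n:ℕ) := Real.rpow_natCast t n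
        rw [h4, h3]
        push_cast
        ring
      rw [intervalIntegral.integral_congr_ae hcongr, intervalIntegral.integral_mul_const,
        intervalIntegral.integral_ofReal,
        integral_rpow (Or.inl (by linarith : (-1:ℝ) < (n:ℝ)+β-1))]
      have hps : (0:ℝ) < (n:ℝ)+β-1+1 := by
        have : (0:ℝ) ≤ (n:ℝ) := Nat.cast_nonneg n
        linarith
      have h0 : ((0:ℝ) ^ ((n:ℝ)+β-1+1)) = 0 := Real.zero_rpow (ne_of_gt hps)
      have h5 : ((1:ℝ) ^ ((n:ℝ)+β-1+1)) = 1 := Real.one_rpow _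
      rw [h0, h5]
      have : ((n:ℝ)+β-1+1) = ((n:ℝ)+β) := by ring
      rw [this]
      push_cast
      ring
    have hterm : ∀ n : ℕ,
        a n * (r:ℂ)^n * (Complex.sin (Real.pi * (((n:ℝ) + β : ℝ):ℂ)) /
            (Real.pi * (((n:ℝ) + β : ℝ):ℂ)))
          = ((Real.sin (β*Real.pi)/Real.pi : ℝ):ℂ)
            * (a n * (-(r:ℂ))^n * (((1/((n:ℝ)+β) : ℝ)):ℂ)) := by
      intro n
      have hne : (((n:ℝ) + β)) ≠ 0 := by positivity
      have hneC : ((((n:ℝ) + β : ℝ)):ℂ) ≠ 0 := by exact_mod_cast hne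
      rw [show ((Real.pi:ℂ) * (((n:ℝ) + β : ℝ):ℂ)) = ((Real.pi * ((n:ℝ)+β) : ℝ):ℂ) from by
          push_cast; ring,
        ← Complex.ofReal_sin, hsin n]
      rw [neg_pow]
      push_cast
      field_simp
      ring
    have hBval := hB.mul_left (((Real.sin (β*Real.pi)/Real.pi : ℝ):ℂ))
    have he1 : (fun n => ((Real.sin (β*Real.pi)/Real.pi : ℝ):ℂ)
          * ∫ t in (0:ℝ)..1, ((t ^ (β-1) :ℝ):ℂ) * (a n * (-((r:ℂ) * (t:ℝ)))^n))
        = fun n => a n * (r:ℂ)^n * (Complex.sin (Real.pi * (((n:ℝ) + β : ℝ):ℂ)) /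
            (Real.pi * (((n:ℝ) + β : ℝ):ℂ))) := by
      funext n
      rw [hBterm n, ← hterm n]
    rw [he1] at hBval
    have he2 := funext hAterm
    rw [he2] at hA
    exact hA.unique hBval
  -- limits as r → 1⁻
  have hmem1 : ∀ x : ℝ, e x ∈ Metric.closedBall (0:ℂ) 1 := by
    intro x
    rw [Metric.mem_closedBall, dist_zero_right, hnorme]
  have hIoo : Set.Ioo (0:ℝ) 1 ∈ nhdsWithin (1:ℝ) (Set.Iio 1) :=
    Ioo_mem_nhdsLT_of_mem (by norm_num : (1:ℝ) ∈ Set.Ioc 0 1)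
  have hAlim : Filter.Tendsto (fun r : ℝ =>
      ∫ x in (-(1/2):ℝ)..(1/2), f ((r:ℂ) * e x) * Complex.exp (2*Real.pi*Complex.I*x*β))
      (nhdsWithin (1:ℝ) (Set.Iio 1))
      (nhds (∫ x in (-(1/2):ℝ)..(1/2), f (e x) * Complex.exp (2*Real.pi*Complex.I*x*β))) := by
    apply intervalIntegral.tendsto_integral_filter_of_dominated_convergence (bound := fun _ => C)
    · filter_upwards [hIoo] with r hr
      apply Continuous.aestronglyMeasurable
      apply Continuous.mul _ (Complex.continuous_exp.comp
        ((continuous_const.mul Complex.continuous_ofReal).mul continuous_const))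
      apply hf_cont.comp_continuous
        (continuous_const.mul (Complex.continuous_exp.comp
          (continuous_const.mul Complex.continuous_ofReal)))
      intro x
      simp only [Function.comp_apply, Pi.mul_apply]
      rw [Metric.mem_closedBall, dist_zero_right, norm_mul,
        show ‖Complex.exp (2 * (Real.pi:ℂ) * Complex.I * (x:ℝ))‖ = 1 from hnorme x, mul_one,
        Complex.norm_real, Real.norm_eq_abs, abs_of_pos hr.1]
      exact hr.2.le
    · filter_upwards [hIoo] with r hr
      filter_upwards with x
      intro hx
      rw [norm_mul, hnormb, mul_one]
      apply hC
      rw [Metric.mem_closedBall, dist_zero_right, norm_mul, hnorme, mul_one, Complex.norm_real,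
        Real.norm_eq_abs, abs_of_pos hr.1]
      exact hr.2.le
    · exact intervalIntegrable_const
    · filter_upwards with x
      intro hx
      apply Filter.Tendsto.mul_const
      have h1 : Filter.Tendsto (fun r : ℝ => (r:ℂ) * e x) (nhdsWithin (1:ℝ) (Set.Iio 1))
          (nhdsWithin (e x) (Metric.closedBall (0:ℂ) 1)) := by
        rw [tendsto_nhdsWithin_iff]
        constructor
        · have h2 : Filter.Tendsto (fun r : ℝ => (r:ℂ)) (nhdsWithin (1:ℝ) (Set.Iio 1))
              (nhds ((1:ℝ):ℂ)) :=
            (Complex.continuous_ofReal.tendsto 1).mono_left nhdsWithin_le_nhds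
          have h3 := h2.mul_const (e x)
          simpa using h3
        · filter_upwards [hIoo] with r hr
          rw [Metric.mem_closedBall, dist_zero_right, norm_mul, hnorme, mul_one,
            Complex.norm_real, Real.norm_eq_abs, abs_of_pos hr.1]
          exact hr.2.le
      exact Filter.Tendsto.comp (hf_cont _ (hmem1 x)) h1
  have hBlim : Filter.Tendsto (fun r : ℝ =>
      ∫ t in (0:ℝ)..1, ((t ^ (β-1) :ℝ):ℂ) * f (-((r:ℂ) * (t:ℝ))))
      (nhdsWithin (1:ℝ) (Set.Iio 1))
      (nhds (∫ t in (0:ℝ)..1, ((t ^ (β-1) :ℝ):ℂ) * f (-((t:ℝ):ℂ)))) := by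
    have htarget : (fun t : ℝ => ((t ^ (β-1) :ℝ):ℂ) * f (-((t:ℝ):ℂ)))
        = fun t : ℝ => ((t ^ (β-1) :ℝ):ℂ) * f (-(((1:ℝ):ℂ) * (t:ℝ))) := by
      funext t
      norm_num
    rw [htarget]
    apply intervalIntegral.tendsto_integral_filter_of_dominated_convergence
      (bound := fun t => C * t ^ (β-1))
    · filter_upwards [hIoo] with r hr
      apply ContinuousOn.aestronglyMeasurable _ measurableSet_uIoc
      rw [Set.uIoc_of_le (by norm_num : (0:ℝ) ≤ 1)]
      apply ContinuousOn.mul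
      · apply Complex.continuous_ofReal.comp_continuousOn
        intro t ht
        exact (Real.continuousAt_rpow_const t (β-1) (Or.inl (ne_of_gt ht.1))).continuousWithinAt
      · apply ContinuousOn.comp hf_cont
          (((continuous_const.mul Complex.continuous_ofReal).neg).continuousOn)
        intro t ht
        simp only [Pi.neg_apply, Pi.mul_apply]
        rw [Metric.mem_closedBall, dist_zero_right, norm_neg, norm_mul, Complex.norm_real,
          Complex.norm_real, Real.norm_eq_abs, Real.norm_eq_abs, abs_of_pos hr.1,
          abs_of_pos ht.1]
        nlinarith [ht.2, hr.2, hr.1, ht.1]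
    · filter_upwards [hIoo] with r hr
      rw [Set.uIoc_of_le (by norm_num : (0:ℝ) ≤ 1)]
      filter_upwards with t
      intro ht
      rw [norm_mul, Complex.norm_real, Real.norm_eq_abs,
        _root_.abs_of_nonneg (Real.rpow_nonneg ht.1.le _)]
      have hf1 : ‖f (-((r:ℂ) * (t:ℝ)))‖ ≤ C := by
        apply hC
        rw [Metric.mem_closedBall, dist_zero_right, norm_neg, norm_mul, Complex.norm_real,
          Complex.norm_real, Real.norm_eq_abs, Real.norm_eq_abs, abs_of_pos hr.1,
          abs_of_pos ht.1]
        nlinarith [ht.2, hr.2, hr.1, ht.1]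
      calc t ^ (β-1) * ‖f (-((r:ℂ) * (t:ℝ)))‖ ≤ t ^ (β-1) * C :=
            mul_le_mul_of_nonneg_left hf1 (Real.rpow_nonneg ht.1.le _)
        _ = C * t ^ (β-1) := by ring
    · exact (intervalIntegrable_rpow' (by linarith)).const_mul C
    · rw [Set.uIoc_of_le (by norm_num : (0:ℝ) ≤ 1)]
      filter_upwards with t
      intro ht
      apply Filter.Tendsto.const_mul
      have hmem2 : -(((1:ℝ):ℂ) * (t:ℝ)) ∈ Metric.closedBall (0:ℂ) 1 := by
        rw [Metric.mem_closedBall, dist_zero_right, norm_neg, norm_mul, Complex.norm_real,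
          Complex.norm_real, Real.norm_eq_abs, Real.norm_eq_abs, abs_of_pos ht.1]
        norm_num
        exact ht.2
      have h1 : Filter.Tendsto (fun r : ℝ => -((r:ℂ) * (t:ℝ))) (nhdsWithin (1:ℝ) (Set.Iio 1))
          (nhdsWithin (-(((1:ℝ):ℂ) * (t:ℝ))) (Metric.closedBall (0:ℂ) 1)) := by
        rw [tendsto_nhdsWithin_iff]
        constructor
        · have h2 : Filter.Tendsto (fun r : ℝ => (r:ℂ)) (nhdsWithin (1:ℝ) (Set.Iio 1))
              (nhds ((1:ℝ):ℂ)) :=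
            (Complex.continuous_ofReal.tendsto 1).mono_left nhdsWithin_le_nhds
          exact ((h2.mul_const ((t:ℝ):ℂ)).neg)
        · filter_upwards [hIoo] with r hr
          rw [Metric.mem_closedBall, dist_zero_right, norm_neg, norm_mul, Complex.norm_real,
            Complex.norm_real, Real.norm_eq_abs, Real.norm_eq_abs, abs_of_pos hr.1,
            abs_of_pos ht.1]
          nlinarith [ht.2, hr.2, hr.1, ht.1]
      exact Filter.Tendsto.comp (hf_cont _ hmem2) h1
  have hev : (fun r : ℝ => ((Real.sin (β*Real.pi)/Real.pi : ℝ):ℂ)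
        * ∫ t in (0:ℝ)..1, ((t ^ (β-1) :ℝ):ℂ) * f (-((r:ℂ) * (t:ℝ))))
      =ᶠ[nhdsWithin (1:ℝ) (Set.Iio 1)]
      (fun r : ℝ =>
        ∫ x in (-(1/2):ℝ)..(1/2), f ((r:ℂ) * e x) * Complex.exp (2*Real.pi*Complex.I*x*β)) := by
    filter_upwards [hIoo] with r hr
    exact (key r hr).symm
  have hBlim2 := (hBlim.const_mul (((Real.sin (β*Real.pi)/Real.pi : ℝ):ℂ))).congr' hev
  have hfinal := tendsto_nhds_unique hAlim hBlim2
  have hfs : fsharp f (-β)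
      = ∫ x in (-(1/2):ℝ)..(1/2), f (e x) * Complex.exp (2*Real.pi*Complex.I*x*β) := by
    have harg : ∀ x : ℝ, -(2 * (Real.pi:ℂ) * Complex.I * (x:ℝ) * ((-β : ℝ):ℂ))
        = 2 * (Real.pi:ℂ) * Complex.I * (x:ℝ) * (β:ℂ) := by
      intro x; push_cast; ring
    unfold fsharp
    apply intervalIntegral.integral_congr
    intro x hx
    simp only [harg]
    rfl
  rw [hfs, hfinal]

/-- Fractional order Taylor series, negative index part (Hara–Hino Thm 2.1, eq. (2.5)).
The sum `Σ_{j=-∞}^{-1} f^#(αj) λ^{-αj}` is indexed by `j = -(k+1)`, `k ∈ ℕ`. -/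
theorem fractional_taylor_negative_part (f : ℂ → ℂ)
    (hf_cont : ContinuousOn f (Metric.closedBall 0 1))
    (hf_holo : DifferentiableOn ℂ f (Metric.ball 0 1))
    (α : ℝ) (hα0 : 0 < α) (hα2 : α < 2)
    (lam : ℝ) (hl0 : 0 < lam) (hl1 : lam < 1) :
    (α : ℂ) * ∑' k : ℕ, fsharp f (-(α * (k + 1))) * ((lam ^ (α * (k + 1)) : ℝ) : ℂ) =
      ((α * lam ^ α * Real.sin (α * Real.pi) / Real.pi : ℝ) : ℂ) *
        ∫ t in (0:ℝ)..1,
          ((t ^ (α - 1) /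
              (1 - 2 * (lam * t) ^ α * Real.cos (α * Real.pi) + (lam * t) ^ (2 * α)) : ℝ) : ℂ) *
            f (-(t : ℂ)) := by
  obtain ⟨C, hC⟩ := (isCompact_closedBall (0:ℂ) 1).exists_bound_of_continuousOn hf_cont
  have hC0 : 0 ≤ C := le_trans (norm_nonneg _) (hC 0 (by simp))
  have hlam1 : lam ^ α < 1 := Real.rpow_lt_one hl0.le hl1 hα0
  have hlam0 : 0 < lam ^ α := Real.rpow_pos_of_pos hl0 α
  set J : ℕ → ℂ := fun k => ∫ t in (0:ℝ)..1,
    ((t ^ (α * ((k:ℝ)+1) - 1) : ℝ):ℂ) * f (-(t:ℂ)) with hJ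
  set F : ℕ → ℝ → ℂ := fun k t =>
    ((Real.sin (α * ((k:ℝ)+1) * Real.pi) * lam ^ (α*((k:ℝ)+1)) * t ^ (α*((k:ℝ)+1) - 1) : ℝ):ℂ)
      * f (-(t:ℂ)) with hF
  set g : ℝ → ℂ := fun t =>
    ((lam ^ α * Real.sin (α * Real.pi) * (t ^ (α-1) /
      (1 - 2*(lam*t)^α*Real.cos (α*Real.pi) + (lam*t)^(2*α))) : ℝ):ℂ) * f (-(t:ℂ)) with hg
  have hfmem : ∀ t : ℝ, t ∈ Set.Ioc (0:ℝ) 1 → -(t:ℂ) ∈ Metric.closedBall (0:ℂ) 1 := by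
    intro t ht
    rw [Metric.mem_closedBall, dist_zero_right, norm_neg, Complex.norm_real, Real.norm_eq_abs,
      abs_of_pos ht.1]
    exact ht.2
  have hLpow : ∀ k : ℕ, lam ^ (α*((k:ℝ)+1)) = (lam^α)^k * lam^α := by
    intro k
    rw [← Real.rpow_natCast (lam^α) k, ← Real.rpow_mul hl0.le, ← Real.rpow_add hl0]
    congr 1
    ring
  have hS : HasSum (fun k : ℕ => ∫ t in (0:ℝ)..1, F k t) (∫ t in (0:ℝ)..1, g t) := by
    apply intervalIntegral.hasSum_integral_of_dominated_convergence
      (bound := fun k t => (lam^α)^k * ((lam^α) * C * t^(α-1)))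
    · intro k
      apply ContinuousOn.aestronglyMeasurable _ measurableSet_uIoc
      rw [Set.uIoc_of_le (by norm_num : (0:ℝ) ≤ 1)]
      apply ContinuousOn.mul
      · apply Complex.continuous_ofReal.comp_continuousOn
        apply ContinuousOn.mul continuousOn_const
        intro t ht
        exact (Real.continuousAt_rpow_const t _ (Or.inl (ne_of_gt ht.1))).continuousWithinAt
      · apply ContinuousOn.comp hf_cont
          ((Complex.continuous_ofReal.neg).continuousOn)
        intro t ht
        exact hfmem t ht
    · intro k
      rw [Set.uIoc_of_le (by norm_num : (0:ℝ) ≤ 1)]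
      filter_upwards with t
      intro ht
      have ht0 : 0 < t := ht.1
      have hT : t ^ (α*((k:ℝ)+1)-1) ≤ t^(α-1) := by
        apply Real.rpow_le_rpow_of_exponent_ge ht0 ht.2
        have : (0:ℝ) ≤ (k:ℝ) := Nat.cast_nonneg k
        nlinarith
      have hfb : ‖f (-(t:ℂ))‖ ≤ C := hC _ (hfmem t ht)
      rw [hF]
      rw [norm_mul, Complex.norm_real, Real.norm_eq_abs]
      have habs : |Real.sin (α * ((k:ℝ)+1) * Real.pi) * lam ^ (α*((k:ℝ)+1)) * t ^ (α*((k:ℝ)+1) - 1)|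
          ≤ lam ^ (α*((k:ℝ)+1)) * t ^ (α*((k:ℝ)+1) - 1) := by
        rw [abs_mul, abs_mul, _root_.abs_of_nonneg (Real.rpow_nonneg hl0.le _),
          _root_.abs_of_nonneg (Real.rpow_nonneg ht0.le _)]
        have hs1 : |Real.sin (α * ((k:ℝ)+1) * Real.pi)| ≤ 1 := Real.abs_sin_le_one _
        have hL0 : (0:ℝ) ≤ lam ^ (α*((k:ℝ)+1)) := Real.rpow_nonneg hl0.le _
        have hT0 : (0:ℝ) ≤ t ^ (α*((k:ℝ)+1)-1) := Real.rpow_nonneg ht0.le _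
        calc |Real.sin (α * ((k:ℝ)+1) * Real.pi)| * lam ^ (α*((k:ℝ)+1)) * t ^ (α*((k:ℝ)+1) - 1)
            ≤ 1 * lam ^ (α*((k:ℝ)+1)) * t ^ (α*((k:ℝ)+1) - 1) :=
              mul_le_mul_of_nonneg_right (mul_le_mul_of_nonneg_right hs1 hL0) hT0
          _ = lam ^ (α*((k:ℝ)+1)) * t ^ (α*((k:ℝ)+1) - 1) := by ring
      have h1 : |Real.sin (α * ((k:ℝ)+1) * Real.pi) * lam ^ (α*((k:ℝ)+1)) * t ^ (α*((k:ℝ)+1) - 1)|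
            * ‖f (-(t:ℂ))‖
          ≤ (lam ^ (α*((k:ℝ)+1)) * t ^ (α*((k:ℝ)+1) - 1)) * C := by
        apply mul_le_mul habs hfb (norm_nonneg _)
        positivity
      refine le_trans h1 ?_
      rw [hLpow k]
      have hp1 : (0:ℝ) ≤ (lam^α)^k := by positivity
      nlinarith [Real.rpow_nonneg ht0.le (α-1), hT, hp1, hlam0.le,
        mul_le_mul_of_nonneg_left hT (mul_nonneg hp1 hlam0.le)]
    · filter_upwards with t
      intro ht
      exact (summable_geometric_of_lt_one hlam0.le hlam1).mul_right _
    · have heq : (fun t:ℝ => ∑' k:ℕ, (lam^α)^k * ((lam^α) * C * t^(α-1)))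
          = fun t:ℝ => ((∑' k:ℕ, (lam^α)^k) * ((lam^α) * C)) * t^(α-1) := by
        funext t
        rw [tsum_mul_right]
        ring
      rw [heq]
      exact (intervalIntegrable_rpow' (by linarith)).const_mul _
    · rw [Set.uIoc_of_le (by norm_num : (0:ℝ) ≤ 1)]
      filter_upwards with t
      intro ht
      have ht0 : 0 < t := ht.1
      have hlt0 : 0 < lam * t := by positivity
      have hw0 : (0:ℝ) ≤ (lam*t)^α := Real.rpow_nonneg hlt0.le α
      have hwlt : (lam*t)^α < 1 := by
        apply Real.rpow_lt_one hlt0.le _ hα0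
        nlinarith [ht.2]
      have h := (hasSum_sin_geom ((lam*t)^α) (α*Real.pi) hw0 hwlt).mul_left (lam^α * t^(α-1))
      have hterm : ∀ k:ℕ, lam^α * t^(α-1) * (((lam*t)^α)^k * Real.sin (((k:ℝ)+1)*(α*Real.pi)))
          = Real.sin (α*((k:ℝ)+1)*Real.pi) * lam^(α*((k:ℝ)+1)) * t^(α*((k:ℝ)+1)-1) := by
        intro k
        have h1 : ((lam*t)^α)^k = lam^(α*(k:ℝ)) * t^(α*(k:ℝ)) := by
          rw [← Real.rpow_natCast ((lam*t)^α) k, ← Real.rpow_mul hlt0.le,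
            Real.mul_rpow hl0.le ht0.le]
        have h2 : lam^(α*((k:ℝ)+1)) = lam^α * lam^(α*(k:ℝ)) := by
          rw [← Real.rpow_add hl0]
          congr 1
          ring
        have h3 : t^(α*((k:ℝ)+1)-1) = t^(α-1) * t^(α*(k:ℝ)) := by
          rw [← Real.rpow_add ht0]
          congr 1
          ring
        have h4 : Real.sin (((k:ℝ)+1)*(α*Real.pi)) = Real.sin (α*((k:ℝ)+1)*Real.pi) := by
          congr 1
          ring
        rw [h1, h2, h3, h4]
        ring
      have hval : lam^α * t^(α-1) * (Real.sin (α*Real.pi) /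
            (1 - 2*((lam*t)^α)*Real.cos (α*Real.pi) + ((lam*t)^α)^2))
          = lam ^ α * Real.sin (α * Real.pi) * (t ^ (α-1) /
            (1 - 2*(lam*t)^α*Real.cos (α*Real.pi) + (lam*t)^(2*α))) := by
        have h5 : (lam*t)^(2*α) = ((lam*t)^α)^2 := by
          rw [show (2*α) = α*2 by ring, Real.rpow_mul hlt0.le]
          norm_num
        rw [h5]
        ring
      rw [funext hterm, hval] at h
      have h2 := h.mapL Complex.ofRealCLM
      simp only [Complex.ofRealCLM_apply] at h2
      exact h2.mul_right (f (-(t:ℂ)))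
  have hSterm : ∀ k : ℕ, (∫ t in (0:ℝ)..1, F k t)
      = ((Real.sin (α * ((k:ℝ)+1) * Real.pi) * lam ^ (α*((k:ℝ)+1)) : ℝ):ℂ) * J k := by
    intro k
    rw [hJ]
    rw [← intervalIntegral.integral_const_mul]
    apply intervalIntegral.integral_congr
    intro t ht
    rw [hF]
    push_cast
    ring
  have hLHS : ∀ k : ℕ, fsharp f (-(α * ((k:ℝ)+1))) * ((lam ^ (α * ((k:ℝ)+1)) : ℝ):ℂ)
      = (1/(Real.pi:ℂ)) * ∫ t in (0:ℝ)..1, F k t := by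
    intro k
    rw [hSterm k, claimB f hf_cont hf_holo (α*((k:ℝ)+1)) (by positivity)]
    push_cast
    ring
  calc (α : ℂ) * ∑' k : ℕ, fsharp f (-(α * (k + 1))) * ((lam ^ (α * (k + 1)) : ℝ) : ℂ)
      = (α : ℂ) * ∑' k : ℕ, (1/(Real.pi:ℂ)) * ∫ t in (0:ℝ)..1, F k t := by
        rw [tsum_congr hLHS]
    _ = (α : ℂ) * ((1/(Real.pi:ℂ)) * ∑' k : ℕ, ∫ t in (0:ℝ)..1, F k t) := by
        rw [tsum_mul_left]
    _ = (α : ℂ) * ((1/(Real.pi:ℂ)) * ∫ t in (0:ℝ)..1, g t) := by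
        rw [hS.tsum_eq]
    _ = ((α * lam ^ α * Real.sin (α * Real.pi) / Real.pi : ℝ) : ℂ) *
        ∫ t in (0:ℝ)..1,
          ((t ^ (α - 1) /
              (1 - 2 * (lam * t) ^ α * Real.cos (α * Real.pi) + (lam * t) ^ (2 * α)) : ℝ) : ℂ) *
            f (-(t : ℂ)) := by
        have hgi : (∫ t in (0:ℝ)..1, g t)
            = ((lam ^ α * Real.sin (α * Real.pi) : ℝ):ℂ) * ∫ t in (0:ℝ)..1,
              ((t ^ (α - 1) /
                (1 - 2 * (lam * t) ^ α * Real.cos (α * Real.pi) + (lam * t) ^ (2 * α)) : ℝ) : ℂ) *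
                f (-(t : ℂ)) := by
          rw [← intervalIntegral.integral_const_mul]
          apply intervalIntegral.integral_congr
          intro t ht
          rw [hg]
          push_cast
          ring
        rw [hgi]
        push_cast
        ring
end

section
/- Let f be continuous on the closed unit disk and holomorphic on the open unit disk, with f^#(ξ) = ∫_{−1/2}^{1/2} f(e^{2πix}) e^{−2πixξ} dx. If 0 < α < 2 and Σ_{j∈ℤ} |f^#(αj)| < ∞, then α · Σ_{j=−∞}^{∞} f^#(αj) = f(1). -/
open MeasureTheory Set Filter Topology AddCircle ContinuousMap

/-- If two functions agree a.e. and are both continuous at a point, and the measure is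
positive on open sets, then they agree at that point. -/
lemma eq_of_ae_eq_of_continuousAt {X : Type*} [TopologicalSpace X] [MeasurableSpace X]
    {μ : MeasureTheory.Measure X} [μ.IsOpenPosMeasure] {f g : X → ℂ} {x : X}
    (h : f =ᵐ[μ] g) (hf : ContinuousAt f x) (hg : ContinuousAt g x) : f x = g x := by
  by_contra hne
  have hd : 0 < dist (f x) (g x) := dist_pos.2 hne
  have hcont : ContinuousAt (fun y => dist (f y) (g y)) x := hf.dist hg
  have hev : {y | dist (f y) (g y) ∈ Set.Ioi (0:ℝ)} ∈ 𝓝 x := hcont (Ioi_mem_nhds hd)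
  obtain ⟨U, hUsub, hUopen, hxU⟩ := mem_nhds_iff.mp hev
  have hpos : 0 < μ U := hUopen.measure_pos μ ⟨x, hxU⟩
  have hzero : μ {y | f y ≠ g y} = 0 := h
  have : μ U = 0 := by
    refine le_antisymm (le_trans (measure_mono ?_) hzero.le) zero_le
    intro y hy
    have : 0 < dist (f y) (g y) := hUsub hy
    exact fun hfg => (dist_pos.mp this) hfg
  exact absurd this hpos.ne'

set_option maxHeartbeats 1000000

/-- `α Σ_{j∈ℤ} f^#(αj) = f(1)` under absolute summability. -/
theorem fractional_taylor_at_one (f : ℂ → ℂ)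
    (hf_cont : ContinuousOn f (Metric.closedBall 0 1))
    (hf_holo : DifferentiableOn ℂ f (Metric.ball 0 1))
    (α : ℝ) (hα0 : 0 < α) (hα2 : α < 2)
    (hsum : Summable (fun j : ℤ => ‖fsharp f (α * j)‖)) :
    (α : ℂ) * ∑' j : ℤ, fsharp f (α * j) = f 1 := by
  have hπ := Real.pi_pos
  set T : ℝ := 1/α with hTdef
  have hT0 : 0 < T := by positivity
  have hT12 : 1/2 < T := by
    rw [hTdef, lt_div_iff₀ hα0]; linarith
  haveI : Fact (0 < T) := ⟨hT0⟩
  set F : ℝ → ℂ := fun x => f (Complex.exp (2 * Real.pi * Complex.I * x)) with hFdef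
  have hFcont : Continuous F := by
    apply hf_cont.comp_continuous
    · exact Complex.continuous_exp.comp (by fun_prop)
    · intro x
      rw [Metric.mem_closedBall, dist_zero_right, Complex.norm_exp]
      have : (2 * Real.pi * Complex.I * x).re = 0 := by
        simp [Complex.mul_re, Complex.mul_im]
      rw [this, Real.exp_zero]
  set g : ℝ → ℂ := (Set.Ioc (-(1/2):ℝ) (1/2)).indicator F with hgdef
  set P : ℝ → ℂ := fun x => g (x - T) + g x + g (x + T) with hPdef
  set Q : AddCircle T → ℂ := AddCircle.liftIoc T (-(T/2)) P with hQdef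
  set c : ℤ → ℂ := fun n => fsharp f (α * n) with hcdef
  have hαC : (α : ℂ) ≠ 0 := Complex.ofReal_ne_zero.mpr hα0.ne'
  have hcsummable : Summable c := by
    apply Summable.of_norm
    simpa using hsum
  -- The key Fourier coefficient computation
  have hQcoeff : ∀ n : ℤ, fourierCoeff Q n = (α:ℂ) * c n := by
    intro n
    set E : ℝ → ℂ := fun x : ℝ => fourier (-n) ((x : ℝ) : AddCircle T) with hEdef
    have hEcont : Continuous E :=
      (map_continuous (fourier (-n))).comp (AddCircle.continuous_mk' T)
    have hEper : ∀ x : ℝ, E (x + T) = E x := by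
      intro x
      simp only [hEdef]
      rw [AddCircle.coe_add_period]
    -- indicator identity for the truncated boundary function
    have hind : ∀ d : ℝ, (fun x => E x * g (x - d)) =
        (Set.Ioc (-(1/2) + d) (1/2 + d)).indicator (fun x => E x * F (x - d)) := by
      intro d
      funext x
      by_cases hx : x ∈ Set.Ioc (-(1/2) + d) (1/2 + d)
      · obtain ⟨h1, h2⟩ := Set.mem_Ioc.mp hx
        rw [Set.indicator_of_mem hx, hgdef,
          Set.indicator_of_mem (Set.mem_Ioc.mpr ⟨by linarith, by linarith⟩)]
      · rw [Set.indicator_of_notMem hx, hgdef, Set.indicator_of_notMem, mul_zero]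
        intro hmem
        obtain ⟨h1, h2⟩ := Set.mem_Ioc.mp hmem
        exact hx (Set.mem_Ioc.mpr ⟨by linarith, by linarith⟩)
    have hint : ∀ (d a' b' : ℝ),
        IntervalIntegrable (fun x => E x * g (x - d)) MeasureTheory.volume a' b' := by
      intro d a' b'
      rw [hind d, intervalIntegrable_iff]
      apply MeasureTheory.Integrable.indicator _ measurableSet_Ioc
      have hco : Continuous (fun x : ℝ => E x * F (x - d)) :=
        hEcont.mul (hFcont.comp (by fun_prop))
      have h2 : IntervalIntegrable (fun x : ℝ => E x * F (x - d)) MeasureTheory.volume a' b' :=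
        hco.intervalIntegrable a' b'
      rwa [intervalIntegrable_iff] at h2
    have hB : ∀ a' b' : ℝ, IntervalIntegrable (fun x => E x * g x) MeasureTheory.volume a' b' := by
      intro a' b'; simpa using hint 0 a' b'
    have hA : ∀ a' b' : ℝ, IntervalIntegrable (fun x => E x * g (x - T)) MeasureTheory.volume a' b' :=
      fun a' b' => hint T a' b'
    have hC : ∀ a' b' : ℝ, IntervalIntegrable (fun x => E x * g (x + T)) MeasureTheory.volume a' b' := by
      intro a' b'; simpa [sub_neg_eq_add] using hint (-T) a' b'
    have hsplit : (∫ x in (-(T/2))..(-(T/2) + T), E x * P x)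
        = (∫ x in (-(T/2))..(-(T/2) + T), E x * g (x - T))
        + (∫ x in (-(T/2))..(-(T/2) + T), E x * g x)
        + (∫ x in (-(T/2))..(-(T/2) + T), E x * g (x + T)) := by
      rw [← intervalIntegral.integral_add (hA _ _) (hB _ _),
          ← intervalIntegral.integral_add ((hA _ _).add (hB _ _)) (hC _ _)]
      apply intervalIntegral.integral_congr
      intro x _
      simp only [hPdef]
      ring
    have h1 : (∫ x in (-(T/2))..(-(T/2) + T), E x * g (x - T))
        = ∫ x in (-(T/2) - T)..(-(T/2)), E x * g x := by
      have hcs := intervalIntegral.integral_comp_sub_right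
        (a := -(T/2)) (b := -(T/2) + T) (fun u => E u * g u) T
      rw [show (-(T/2) + T - T : ℝ) = -(T/2) by ring] at hcs
      rw [← hcs]
      apply intervalIntegral.integral_congr
      intro x _
      have hE := hEper (x - T)
      rw [show x - T + T = x by ring] at hE
      show E x * g (x - T) = E (x - T) * g (x - T)
      rw [← hE]
    have h3 : (∫ x in (-(T/2))..(-(T/2) + T), E x * g (x + T))
        = ∫ x in (-(T/2) + T)..(-(T/2) + T + T), E x * g x := by
      have hca := intervalIntegral.integral_comp_add_right
        (a := -(T/2)) (b := -(T/2) + T) (fun u => E u * g u) T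
      rw [← hca]
      apply intervalIntegral.integral_congr
      intro x _
      show E x * g (x + T) = E (x + T) * g (x + T)
      rw [hEper x]
    have hbig : (∫ x in (-(T/2) - T)..(-(T/2) + T + T), E x * g x)
        = ∫ x in (-(1/2) : ℝ)..(1/2), E x * F x := by
      rw [intervalIntegral.integral_of_le (by linarith),
          intervalIntegral.integral_of_le (by linarith)]
      have hi0 : (fun x => E x * g x)
          = (Set.Ioc (-(1/2) : ℝ) (1/2)).indicator (fun x => E x * F x) := by
        simpa using hind 0
      rw [hi0, MeasureTheory.setIntegral_indicator measurableSet_Ioc,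
          Set.inter_eq_self_of_subset_right (Set.Ioc_subset_Ioc (by linarith) (by linarith))]
    have key : (∫ x in (-(T/2))..(-(T/2) + T), E x * P x)
        = ∫ x in (-(1/2) : ℝ)..(1/2), E x * F x := by
      rw [hsplit, h1, h3,
        intervalIntegral.integral_add_adjacent_intervals (hB _ _) (hB _ _),
        intervalIntegral.integral_add_adjacent_intervals (hB _ _) (hB _ _)]
      exact hbig
    have hQP : (∫ x in (-(T/2))..(-(T/2) + T), fourier (-n) ((x : ℝ) : AddCircle T) • Q ((x:ℝ) : AddCircle T))
        = ∫ x in (-(T/2))..(-(T/2) + T), E x * P x := by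
      rw [intervalIntegral.integral_of_le (by linarith),
          intervalIntegral.integral_of_le (by linarith)]
      apply MeasureTheory.setIntegral_congr_fun measurableSet_Ioc
      intro x hx
      show (fourier (-n)) ((x:ℝ) : AddCircle T) • Q ((x:ℝ) : AddCircle T) = E x * P x
      rw [smul_eq_mul, hQdef, AddCircle.liftIoc_coe_apply hx]
    rw [fourierCoeff_eq_intervalIntegral Q n (-(T/2)), hQP, key]
    -- final algebra
    rw [show (1 / T : ℝ) = α by rw [hTdef, one_div_one_div]]
    rw [hcdef]
    simp only [fsharp]
    rw [Complex.real_smul]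
    congr 1
    apply intervalIntegral.integral_congr
    intro x _
    simp only [hEdef, hFdef]
    rw [fourier_coe_apply, mul_comm]
    congr 2
    push_cast
    rw [hTdef]
    push_cast
    field_simp
  -- measurability and boundedness of Q
  have hgmeas : Measurable g := hFcont.measurable.indicator measurableSet_Ioc
  have hPmeas : Measurable P := by
    rw [hPdef]
    exact ((hgmeas.comp (measurable_id.sub_const T)).add hgmeas).add
      (hgmeas.comp (measurable_id.add_const T))
  have hQmeas : Measurable Q := by
    have : Measurable ((fun x : Set.Ioc (-(T/2)) (-(T/2)+T) => P (x:ℝ)) ∘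
        (AddCircle.measurableEquivIoc T (-(T/2)))) :=
      (hPmeas.comp measurable_subtype_coe).comp
        (AddCircle.measurableEquivIoc T (-(T/2))).measurable
    exact this
  obtain ⟨M, hM⟩ := (isCompact_Icc :
    IsCompact (Set.Icc (-(1/2):ℝ) (1/2))).exists_bound_of_continuousOn hFcont.continuousOn
  have hgbound : ∀ x, ‖g x‖ ≤ max M 0 := by
    intro x
    rw [hgdef]
    by_cases hx : x ∈ Set.Ioc (-(1/2):ℝ) (1/2)
    · rw [Set.indicator_of_mem hx]
      exact le_trans (hM x (Set.Ioc_subset_Icc_self hx)) (le_max_left _ _)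
    · rw [Set.indicator_of_notMem hx]
      simp
  have hPbound : ∀ x, ‖P x‖ ≤ max M 0 + max M 0 + max M 0 := by
    intro x
    rw [hPdef]
    exact le_trans (norm_add_le _ _)
      (add_le_add (le_trans (norm_add_le _ _) (add_le_add (hgbound _) (hgbound _))) (hgbound _))
  have hQbound : ∀ y, ‖Q y‖ ≤ max M 0 + max M 0 + max M 0 := by
    intro y
    have : Q y = P ((AddCircle.equivIoc T (-(T/2)) y : ℝ)) := rfl
    rw [this]
    exact hPbound _
  have hQmem : MeasureTheory.MemLp Q 2 haarAddCircle :=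
    MeasureTheory.MemLp.of_bound hQmeas.aestronglyMeasurable _
      (Filter.Eventually.of_forall hQbound)
  -- Fourier series convergence
  have hQcoeffsummable : Summable (fun n => fourierCoeff Q n) := by
    simp only [hQcoeff]
    exact hcsummable.mul_left _
  have hCsum : Summable (fun n : ℤ => fourierCoeff Q n • fourier n (T := T)) := by
    apply Summable.of_norm
    simp only [norm_smul, fourier_norm, mul_one]
    exact hQcoeffsummable.norm
  set G : C(AddCircle T, ℂ) := ∑' n : ℤ, fourierCoeff Q n • fourier n with hGdef
  have hGsum : HasSum (fun n : ℤ => fourierCoeff Q n • fourier n) G := hCsum.hasSum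
  have hLpsum : HasSum (fun n : ℤ => fourierCoeff Q n • fourierLp 2 n)
      (ContinuousMap.toLp (E := ℂ) 2 haarAddCircle ℂ G) := by
    have := (ContinuousMap.toLp (E := ℂ) 2 haarAddCircle ℂ).hasSum hGsum
    simpa [_root_.map_smul] using this
  have hL2 := hasSum_fourier_series_L2 (hQmem.toLp Q)
  have hcoeff_eq : ∀ i : ℤ, fourierCoeff ((hQmem.toLp Q : Lp ℂ 2 haarAddCircle) : AddCircle T → ℂ) i
      = fourierCoeff Q i := by
    intro i
    unfold fourierCoeff
    apply MeasureTheory.integral_congr_ae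
    filter_upwards [hQmem.coeFn_toLp] with y hy
    rw [hy]
  simp_rw [hcoeff_eq] at hL2
  have hGQ : ContinuousMap.toLp (E := ℂ) 2 haarAddCircle ℂ G = hQmem.toLp Q := hLpsum.unique hL2
  have hae : Q =ᵐ[haarAddCircle] ⇑G := by
    have h1 : Q =ᵐ[haarAddCircle] ⇑(hQmem.toLp Q) := (hQmem.coeFn_toLp).symm
    rw [← hGQ] at h1
    exact h1.trans (ContinuousMap.coeFn_toLp (𝕜 := ℂ) haarAddCircle G)
  -- continuity at 0
  have hPF : P =ᶠ[𝓝 (0:ℝ)] F := by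
    have hδ : (0:ℝ) < min (1/2) (T - 1/2) := by
      apply lt_min (by norm_num) (by linarith)
    filter_upwards [Metric.ball_mem_nhds (0:ℝ) hδ] with x hx
    rw [Metric.mem_ball, Real.dist_eq, sub_zero, lt_min_iff] at hx
    obtain ⟨hx1, hx2⟩ := hx
    rw [abs_lt] at hx1
    rw [abs_lt] at hx2
    have h1 : g (x - T) = 0 := by
      rw [hgdef, Set.indicator_of_notMem]
      intro hmem
      obtain ⟨hm1, hm2⟩ := Set.mem_Ioc.mp hmem
      linarith
    have h3 : g (x + T) = 0 := by
      rw [hgdef, Set.indicator_of_notMem]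
      intro hmem
      obtain ⟨hm1, hm2⟩ := Set.mem_Ioc.mp hmem
      linarith
    have h2 : g x = F x := by
      rw [hgdef, Set.indicator_of_mem (Set.mem_Ioc.mpr ⟨by linarith, by linarith⟩)]
    show P x = F x
    rw [hPdef]
    simp only
    rw [h1, h2, h3, zero_add, add_zero]
  have hPcont0 : ContinuousAt P 0 := hFcont.continuousAt.congr hPF.symm
  have hP0 : P 0 = F 0 := hPF.eq_of_nhds
  have hQcoe : ∀ x : ℝ, x ∈ Set.Ioo (-(T/2)) (T/2) → Q ((x : ℝ) : AddCircle T) = P x := by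
    intro x hx
    obtain ⟨hx1, hx2⟩ := Set.mem_Ioo.mp hx
    rw [hQdef]
    exact AddCircle.liftIoc_coe_apply (Set.mem_Ioc.mpr ⟨hx1, by linarith⟩)
  have hQ0 : Q 0 = F 0 := by
    have h := hQcoe 0 (Set.mem_Ioo.mpr ⟨by linarith, by linarith⟩)
    rw [show (((0:ℝ) : AddCircle T)) = (0 : AddCircle T) by norm_cast] at h
    rw [h, hP0]
  have hQcont0 : ContinuousAt Q (0 : AddCircle T) := by
    rw [ContinuousAt]
    have hnle : 𝓝 (0 : AddCircle T) ≤ Filter.map ((↑) : ℝ → AddCircle T) (𝓝 (0:ℝ)) := by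
      have hmap := (QuotientAddGroup.isOpenMap_coe (G := ℝ)
        (N := AddSubgroup.zmultiples T)).nhds_le (0 : ℝ)
      simpa using hmap
    apply Filter.Tendsto.mono_left _ hnle
    rw [Filter.tendsto_map'_iff]
    have hcongr : (Q ∘ ((↑) : ℝ → AddCircle T)) =ᶠ[𝓝 (0:ℝ)] P := by
      filter_upwards [Ioo_mem_nhds (a := -(T/2)) (b := T/2) (by linarith) (by linarith)] with x hx
      exact hQcoe x hx
    rw [Filter.tendsto_congr' hcongr, hQ0, ← hP0]
    exact hPcont0
  -- conclusion
  have hQG0 : Q 0 = G 0 := eq_of_ae_eq_of_continuousAt hae hQcont0 G.continuous.continuousAt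
  have hGeval : HasSum (fun n : ℤ => fourierCoeff Q n • (fourier n) (0 : AddCircle T)) (G 0) := by
    convert (ContinuousMap.evalCLM ℂ (0 : AddCircle T)).hasSum hGsum using 1
    all_goals rfl
  have hGeval' : HasSum (fun n : ℤ => (α:ℂ) * c n) (G 0) := by
    simpa [hQcoeff, fourier_eval_zero, smul_eq_mul] using hGeval
  have hfinal : HasSum (fun n : ℤ => (α:ℂ) * c n) ((α:ℂ) * ∑' j : ℤ, c j) :=
    hcsummable.hasSum.mul_left _
  have hG0 : (α:ℂ) * ∑' j : ℤ, c j = G 0 := hfinal.unique hGeval'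
  have hF0 : F 0 = f 1 := by
    rw [hFdef]
    norm_num
  calc (α : ℂ) * ∑' j : ℤ, c j = G 0 := hG0
  _ = Q 0 := hQG0.symm
  _ = F 0 := hQ0
  _ = f 1 := hF0
end

section
/- For α ∈ (0,1) and λ ∈ (0,1], one has (1+λ)^α − α(1+λ^α) < 1 − α, with the decomposition (1+λ)^α − α(1+λ^α) = [(1+λ)^α − (1+αλ)] + α(λ − λ^α) + (1−α), where the first bracket is < 0 by strict concavity of λ ↦ (1+λ)^α and the second term is ≤ 0. -/
/-- The elementary inequality used to bound `R(α,1,λ)`, with its decomposition. -/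
theorem key_elementary_inequality (α : ℝ) (hα0 : 0 < α) (hα1 : α < 1)
    (lam : ℝ) (hl0 : 0 < lam) (hl1 : lam ≤ 1) :
    (1 + lam) ^ α - α * (1 + lam ^ α) < 1 - α ∧
    (1 + lam) ^ α - α * (1 + lam ^ α) =
      ((1 + lam) ^ α - (1 + α * lam)) + α * (lam - lam ^ α) + (1 - α) ∧
    (1 + lam) ^ α - (1 + α * lam) < 0 ∧
    α * (lam - lam ^ α) ≤ 0 := by
  have h1 : (1 + lam) ^ α < 1 + α * lam := by
    exact rpow_one_add_lt_one_add_mul_self (by linarith) (ne_of_gt hl0) hα0 hα1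
  have h2 : lam ≤ lam ^ α := by
    calc lam = lam ^ (1 : ℝ) := (Real.rpow_one lam).symm
    _ ≤ lam ^ α := Real.rpow_le_rpow_of_exponent_ge hl0 hl1 hα1.le
  refine ⟨by nlinarith, by ring, by linarith, ?_⟩
  have := mul_nonneg hα0.le (sub_nonneg.mpr h2)
  nlinarith
end
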